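/- Let f ∈ ℂ[x,y] be a primitive homogeneous polynomial of degree d > 1 (f is not of the form g^r for r > 1) whose singularity at the origin is not isolated (f_x and f_y have a common zero in ℂ² other than the origin). Then every torsion element of the Brieskorn module B(f) has torsion order 1, i.e. N(f) = 1: for every g ∈ ℂ[x,y], if f^k·g ∈ D_f for some k ≥ 1, then already f·g ∈ D_f. -/

import Mathlib

open MvPolynomial

/-- Membership in `D_f = {f_x·∂g/∂y − f_y·∂g/∂x : g ∈ ℂ[x,y]}`. -/
def Dmem (f w : MvPolynomial (Fin 2) ℂ) : Prop :=
  ∃ g : MvPolynomial (Fin 2) ℂ,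
    w = pderiv 0 f * pderiv 1 g - pderiv 1 f * pderiv 0 g

namespace S9

abbrev P2 := MvPolynomial (Fin 2) ℂ

lemma deg2 (v : Fin 2 →₀ ℕ) : v.degree = v 0 + v 1 := by
  rw [Finsupp.degree, ← Fin.sum_univ_two (f := fun i => v i)]
  exact Finset.sum_subset (Finset.subset_univ _) (by
    intro i _ hi
    simpa using Finsupp.notMem_support_iff.mp hi)

lemma deg2' (v : Fin 2 →₀ ℕ) : (v.sum fun _ e => e) = v.degree := rfl

lemma fin2_cases (i : Fin 2) : i = 0 ∨ i = 1 := by fin_cases i <;> simp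

lemma single_add_sub {v : Fin 2 →₀ ℕ} {i : Fin 2} (h : v i ≠ 0) :
    Finsupp.single i 1 + (v - Finsupp.single i 1) = v := by
  rw [add_tsub_cancel_of_le]
  exact Finsupp.single_le_iff.mpr (Nat.one_le_iff_ne_zero.mpr h)

lemma sub_single_degree {v : Fin 2 →₀ ℕ} {i : Fin 2} (h : v i ≠ 0) :
    (v - Finsupp.single i 1).degree = v.degree - 1 := by
  rw [deg2, deg2]
  rcases fin2_cases i with rfl | rfl <;>
    · simp only [Finsupp.tsub_apply, Finsupp.single_apply]
      norm_num
      omega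

lemma X_mul_pderiv_monomial (v : Fin 2 →₀ ℕ) (c : ℂ) (i : Fin 2) :
    X i * pderiv i (monomial v c) = monomial v (c * (v i : ℂ)) := by
  rw [pderiv_monomial]
  by_cases h : v i = 0
  · simp [h]
  · rw [X, monomial_mul, one_mul, single_add_sub h]

/-- Euler's identity for homogeneous polynomials in two variables. -/
lemma euler {f : P2} {d : ℕ} (hf : f.IsHomogeneous d) :
    X 0 * pderiv 0 f + X 1 * pderiv 1 f = (d : P2) * f := by
  conv_lhs => rw [f.as_sum]
  conv_rhs => rw [f.as_sum]
  rw [map_sum, map_sum, Finset.mul_sum, Finset.mul_sum, Finset.mul_sum,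
    ← Finset.sum_add_distrib]
  refine Finset.sum_congr rfl fun v hv => ?_
  rw [X_mul_pderiv_monomial, X_mul_pderiv_monomial, ← map_add]
  have hdeg : v 0 + v 1 = d := by
    rw [← deg2]
    rw [Finsupp.degree_eq_weight_one]
    exact hf (mem_support_iff.mp hv)
  rw [show ((d : P2)) = C ((d : ℂ)) from (map_natCast (C : ℂ →+* P2) d).symm, C_mul_monomial]
  congr 1
  push_cast [← hdeg]
  ring

lemma isHomogeneous_pderiv {f : P2} {d : ℕ} (hf : f.IsHomogeneous d) (i : Fin 2) :
    (pderiv i f).IsHomogeneous (d - 1) := by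
  conv => enter [1]; rw [f.as_sum]
  rw [map_sum]
  refine IsHomogeneous.sum _ _ _ fun v hv => ?_
  rw [pderiv_monomial]
  by_cases h : v i = 0
  · simp only [h, Nat.cast_zero, mul_zero, map_zero]
    exact isHomogeneous_zero _ _ _
  · refine isHomogeneous_monomial _ ?_
    have h1 : v.degree = d := by
      rw [Finsupp.degree_eq_weight_one]; exact hf (mem_support_iff.mp hv)
    have h2 := single_add_sub (v := v) (i := i) h
    have h3 : (Finsupp.single i 1 + (v - Finsupp.single i 1)).degree = d := by rw [h2, h1]
    rw [deg2] at h3 ⊢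
    simp only [Finsupp.add_apply, Finsupp.single_apply] at h3
    fin_cases i <;> simp_all <;> omega

lemma hc_homog_mul {h : P2} {a : ℕ} (hh : h.IsHomogeneous a) (w : P2) (e : ℕ) :
    homogeneousComponent e (h * w) =
      if a ≤ e then h * homogeneousComponent (e - a) w else 0 := by
  conv_lhs => rw [← sum_homogeneousComponent w, Finset.mul_sum, map_sum]
  have hterm : ∀ n : ℕ, homogeneousComponent e (h * homogeneousComponent n w) =
      if e = a + n then h * homogeneousComponent n w else 0 := fun n =>
    homogeneousComponent_of_mem ((mem_homogeneousSubmodule _ _).mpr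
      (hh.mul (homogeneousComponent_isHomogeneous n w)))
  by_cases hae : a ≤ e
  · rw [if_pos hae]
    rw [Finset.sum_eq_single (e - a)]
    · rw [hterm, if_pos (by omega)]
    · intro n _ hne
      rw [hterm, if_neg (by omega)]
    · intro hnotmem
      rw [hterm, if_pos (by omega)]
      have : homogeneousComponent (e - a) w = 0 :=
        homogeneousComponent_eq_zero _ _ (by simp at hnotmem; omega)
      rw [this, mul_zero]
  · rw [if_neg hae]
    refine Finset.sum_eq_zero fun n _ => ?_
    rw [hterm, if_neg (by omega)]

lemma hc_top_ne_zero {p : P2} (hp : p ≠ 0) :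
    homogeneousComponent p.totalDegree p ≠ 0 := by
  obtain ⟨v, hv, hvd⟩ := Finset.exists_mem_eq_sup p.support
    (support_nonempty.mpr hp) (fun v => v.sum fun _ e => e)
  have hcoeff : coeff v (homogeneousComponent p.totalDegree p) = coeff v p := by
    rw [coeff_homogeneousComponent, if_pos]
    rw [totalDegree, hvd]
    rfl
  intro h0
  rw [h0, coeff_zero] at hcoeff
  exact mem_support_iff.mp hv hcoeff.symm

lemma td_mul_ge {p q : P2} (hp : p ≠ 0) (hq : q ≠ 0) :
    p.totalDegree + q.totalDegree ≤ (p * q).totalDegree := by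
  set a := p.totalDegree
  set b := q.totalDegree
  have key : homogeneousComponent (a + b) (p * q) =
      homogeneousComponent a p * homogeneousComponent b q := by
    conv_lhs => rw [← sum_homogeneousComponent p, Finset.sum_mul, map_sum]
    rw [Finset.sum_eq_single a]
    · rw [hc_homog_mul (homogeneousComponent_isHomogeneous a p) q (a + b),
        if_pos (by omega), Nat.add_sub_cancel_left]
    · intro n hn hna
      rw [hc_homog_mul (homogeneousComponent_isHomogeneous n p) q (a + b),
        if_pos (by simp at hn; omega)]
      have hz : homogeneousComponent (a + b - n) q = 0 :=
        homogeneousComponent_eq_zero _ _ (by simp at hn; omega)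
      rw [hz, mul_zero]
    · intro hna
      simp at hna
      exact absurd hna (lt_irrefl _)
  have hne : homogeneousComponent (a + b) (p * q) ≠ 0 := by
    rw [key]
    exact mul_ne_zero (hc_top_ne_zero hp) (hc_top_ne_zero hq)
  by_contra hlt
  exact hne (homogeneousComponent_eq_zero _ _ (by omega))

lemma td_dvd_le {p q : P2} (hq : q ≠ 0) (h : p ∣ q) : p.totalDegree ≤ q.totalDegree := by
  obtain ⟨r, rfl⟩ := h
  have hp : p ≠ 0 := fun h0 => hq (by rw [h0, zero_mul])
  have hr : r ≠ 0 := fun h0 => hq (by rw [h0, mul_zero])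
  have := td_mul_ge hp hr
  omega

lemma td_pderiv_le (q : P2) (i : Fin 2) :
    (pderiv i q).totalDegree ≤ q.totalDegree - 1 := by
  conv_lhs => rw [q.as_sum, map_sum]
  refine (totalDegree_finset_sum _ _).trans (Finset.sup_le fun v hv => ?_)
  rw [pderiv_monomial]
  by_cases h : v i = 0
  · simp [h]
  · refine (totalDegree_monomial_le _ _).trans ?_
    have hvd : v.degree ≤ q.totalDegree := by
      rw [← deg2']; exact le_totalDegree hv
    have h2 := sub_single_degree h
    have h3 : 1 ≤ v.degree := by
      rw [deg2]
      rcases fin2_cases i with rfl | rfl <;> omega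
    calc ((v - Finsupp.single i 1).sum fun _ => id) = (v - Finsupp.single i 1).degree := deg2' _
      _ ≤ q.totalDegree - 1 := by omega

lemma isUnit_C' {c : ℂ} (hc : c ≠ 0) : IsUnit (C c : P2) :=
  IsUnit.of_mul_eq_one (C c⁻¹) (by rw [← map_mul, mul_inv_cancel₀ hc, map_one])

lemma eq_C_of_td_eq_zero {p : P2} (h : p.totalDegree = 0) : p = C (coeff 0 p) := by
  ext v
  rw [coeff_C]
  by_cases hv : v = 0
  · subst hv; simp
  · rw [if_neg (Ne.symm hv)]
    by_contra hc
    have hmem : v ∈ p.support := mem_support_iff.mpr hc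
    have := (totalDegree_eq_zero_iff _ p).mp h v hmem
    exact hv (Finsupp.ext this)

lemma pderiv_eq_zero_of_self_dvd {p : P2} (hp0 : ¬ IsUnit p) (hpne : p ≠ 0) (i : Fin 2)
    (h : p ∣ pderiv i p) : pderiv i p = 0 := by
  by_contra hne
  have h1 : p.totalDegree ≤ (pderiv i p).totalDegree := td_dvd_le hne h
  have h2 := td_pderiv_le p i
  have h3 : p.totalDegree = 0 := by omega
  have h4 := eq_C_of_td_eq_zero h3
  refine hp0 ?_
  rw [h4]
  exact isUnit_C' (fun hc => hpne (by rw [h4, hc, map_zero]))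

lemma coeff_pderiv (q : P2) (i : Fin 2) (w : Fin 2 →₀ ℕ) :
    coeff w (pderiv i q) = coeff (w + Finsupp.single i 1) q * ((w i + 1 : ℕ) : ℂ) := by
  conv_lhs => rw [q.as_sum, map_sum]
  rw [coeff_sum]
  simp only [pderiv_monomial, coeff_monomial]
  rw [Finset.sum_eq_single (w + Finsupp.single i 1)]
  · rw [if_pos (by rw [add_tsub_cancel_right])]
    congr 2
    simp [Finsupp.add_apply, Finsupp.single_apply]
  · intro v hv hvne
    by_cases h : v i = 0
    · split
      · simp [h]
      · rfl
    · rw [if_neg]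
      intro heq
      exact hvne (by rw [← heq, add_comm, single_add_sub h])
  · intro hnot
    rw [if_pos (by rw [add_tsub_cancel_right]), notMem_support_iff.mp hnot, zero_mul]

lemma eq_C_of_pderiv_eq_zero {q : P2} (h0 : pderiv 0 q = 0) (h1 : pderiv 1 q = 0) :
    ∃ c, q = C c := by
  refine ⟨coeff 0 q, ?_⟩
  ext v
  rw [coeff_C]
  by_cases hv : v = 0
  · subst hv; simp
  · rw [if_neg (Ne.symm hv)]
    obtain ⟨i, hi⟩ : ∃ i, v i ≠ 0 := by
      by_contra hall
      push_neg at hall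
      exact hv (Finsupp.ext (by simpa using hall))
    have hz : pderiv i q = 0 := by rcases fin2_cases i with rfl | rfl <;> assumption
    have := coeff_pderiv q i (v - Finsupp.single i 1)
    rw [hz, coeff_zero] at this
    have hvv : (v - Finsupp.single i 1) + Finsupp.single i 1 = v := by
      rw [add_comm]; exact single_add_sub hi
    rw [hvv] at this
    have hne : (((v - Finsupp.single i 1 : Fin 2 →₀ ℕ) i + 1 : ℕ) : ℂ) ≠ 0 :=
      Nat.cast_ne_zero.mpr (Nat.succ_ne_zero _)
    rcases mul_eq_zero.mp this.symm with h | h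
    · exact h
    · exact absurd h hne

/-- The Jacobian `f_x g_y - f_y g_x`. -/
noncomputable def Jb (f g : P2) : P2 :=
  pderiv 0 f * pderiv 1 g - pderiv 1 f * pderiv 0 g

lemma Jb_zero' (f : P2) : Jb f 0 = 0 := by simp [Jb]

lemma Jb_C (f : P2) (c : ℂ) : Jb f (C c) = 0 := by simp [Jb]

lemma Jb_sum (f : P2) {ι : Type*} (s : Finset ι) (G : ι → P2) :
    Jb f (∑ i ∈ s, G i) = ∑ i ∈ s, Jb f (G i) := by
  simp only [Jb, map_sum, Finset.mul_sum]
  rw [← Finset.sum_sub_distrib]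

lemma Jb_homog {f g : P2} {d m : ℕ} (hf : f.IsHomogeneous d) (hg : g.IsHomogeneous m) :
    (Jb f g).IsHomogeneous (d - 1 + (m - 1)) := by
  have h1 := (isHomogeneous_pderiv hf 0).mul (isHomogeneous_pderiv hg 1)
  have h2 := (isHomogeneous_pderiv hf 1).mul (isHomogeneous_pderiv hg 0)
  rw [← mem_homogeneousSubmodule] at h1 h2 ⊢
  exact sub_mem h1 h2

lemma yJ {f g : P2} {d m : ℕ} (hf : f.IsHomogeneous d) (hg : g.IsHomogeneous m) :
    X 1 * Jb f g = (m : P2) * (pderiv 0 f * g) - (d : P2) * (f * pderiv 0 g) := by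
  have ef := euler hf
  have eg := euler hg
  unfold Jb
  linear_combination (pderiv 0 f) * eg - (pderiv 0 g) * ef

lemma xJ {f g : P2} {d m : ℕ} (hf : f.IsHomogeneous d) (hg : g.IsHomogeneous m) :
    X 0 * Jb f g = (d : P2) * (f * pderiv 1 g) - (m : P2) * (pderiv 1 f * g) := by
  have ef := euler hf
  have eg := euler hg
  unfold Jb
  linear_combination (pderiv 1 g) * ef - (pderiv 1 f) * eg

lemma Jb_mul_left (f u : P2) : Jb f (f * u) = f * Jb f u := by
  simp only [Jb, pderiv_mul]
  ring

lemma mul_pderiv_pow (p : P2) (b : ℕ) (i : Fin 2) :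
    p * pderiv i (p ^ b) = (b : P2) * p ^ b * pderiv i p := by
  cases b with
  | zero => simp
  | succ n =>
    rw [pderiv_pow]
    push_cast
    ring

lemma dvd_of_prime_pow_dvd {f g : P2} (hg : g ≠ 0)
    (h : ∀ p : P2, Prime p → ∀ n : ℕ, p ^ n ∣ f → p ^ n ∣ g) (hf : f ≠ 0) : f ∣ g := by
  revert g
  have main : ∀ f : P2, ∀ g : P2, g ≠ 0 →
      (∀ p : P2, Prime p → ∀ n : ℕ, p ^ n ∣ f → p ^ n ∣ g) → f ≠ 0 → f ∣ g := by
    intro f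
    induction f using UniqueFactorizationMonoid.induction_on_prime with
    | h₁ => intro g _ _ hf0; exact absurd rfl hf0
    | h₂ x hx => intro g _ _ _; exact hx.dvd
    | h₃ a p ha hp ih =>
      intro g hg hyp _
      have hpg : p ∣ g := by
        have := hyp p hp 1 (by rw [pow_one]; exact Dvd.intro a rfl)
        rwa [pow_one] at this
      obtain ⟨g', rfl⟩ := hpg
      have hg' : g' ≠ 0 := fun h0 => hg (by rw [h0, mul_zero])
      refine mul_dvd_mul_left p (ih g' hg' ?_ ha)
      intro q hq n hqa
      by_cases hqp : q ∣ p
      · obtain ⟨c, hc⟩ := hqp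
        have hcu : IsUnit c := by
          rcases hp.irreducible.isUnit_or_isUnit hc with h | h
          · exact absurd h hq.not_unit
          · exact h
        have h1 : q ^ (n + 1) ∣ p * a := by
          rw [pow_succ', hc]
          exact mul_dvd_mul (Dvd.intro c rfl) hqa
        have h2 : q ^ (n + 1) ∣ p * g' := hyp q hq (n + 1) h1
        rw [hc] at h2
        have h3 : q ^ n ∣ c * g' := by
          rw [pow_succ'] at h2
          rw [mul_assoc] at h2
          exact (mul_dvd_mul_iff_left hq.ne_zero).mp h2
        exact (hcu.dvd_mul_left).mp h3
      · have h1 : q ^ n ∣ p * a := Dvd.dvd.mul_left hqa p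
        have h2 : q ^ n ∣ p * g' := hyp q hq n h1
        exact hq.pow_dvd_of_dvd_mul_left n hqp h2
  intro g hg hyp
  exact main f g hg hyp hf

/-- Core divisibility lemma: if `f` is homogeneous of degree `d`, `g` homogeneous of
degree `m > d`, and `f² ∣ J(f,g)`, then `f ∣ g`. -/
lemma key {f g : P2} {d m : ℕ} (hf : f.IsHomogeneous d) (hg : g.IsHomogeneous m)
    (hdm : d < m) (hf0 : f ≠ 0) (hg0 : g ≠ 0)
    (hdvd : f ^ 2 ∣ Jb f g) : f ∣ g := by
  refine dvd_of_prime_pow_dvd hg0 ?_ hf0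
  intro p hp n hpn
  obtain ⟨a, u, hpu, hfu⟩ := WfDvdMonoid.max_power_factor hf0 hp.irreducible
  obtain ⟨b, v, hpv, hgv⟩ := WfDvdMonoid.max_power_factor hg0 hp.irreducible
  have hpne : p ≠ 0 := hp.ne_zero
  have hppow : ∀ k : ℕ, (p ^ k : P2) ≠ 0 := fun k => pow_ne_zero k hpne
  have hna : n ≤ a := by
    by_contra hlt
    push_neg at hlt
    have h1 : p ^ (a + 1) ∣ p ^ a * u := by
      calc p ^ (a + 1) ∣ p ^ n := pow_dvd_pow p hlt
        _ ∣ f := hpn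
        _ = p ^ a * u := hfu
    rw [pow_succ, mul_dvd_mul_iff_left (hppow a)] at h1
    exact hpu h1
  suffices hab : a ≤ b by
    calc p ^ n ∣ p ^ b := pow_dvd_pow p (le_trans hna hab)
      _ ∣ g := Dvd.intro v hgv.symm
  by_contra hba
  push_neg at hba
  obtain ⟨c, hc, hcne⟩ : ∃ c : ℕ, m * a = d * b + c ∧ c ≠ 0 := by
    have h1 : d * b < m * a := by
      have hd1 : d * b ≤ d * a := Nat.mul_le_mul_left d (le_of_lt hba)
      have hd2 : d * a < m * a := by
        have ha1 : 1 ≤ a := by omega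
        exact Nat.mul_lt_mul_of_lt_of_le hdm (le_refl a) (by omega)
      omega
    exact ⟨m * a - d * b, by omega, by omega⟩
  have hcu : IsUnit ((c : ℕ) : P2) := by
    rw [(map_natCast (C : ℂ →+* P2) c).symm]
    exact isUnit_C' (Nat.cast_ne_zero.mpr hcne)
  have hccast : ((m : P2) * (a : P2)) = (d : P2) * (b : P2) + (c : P2) := by
    have := congrArg (Nat.cast : ℕ → P2) hc
    push_cast at this
    exact this
  have hJ : p ^ (a + b + 1) ∣ Jb f g := by
    calc p ^ (a + b + 1) ∣ p ^ (2 * a) := pow_dvd_pow p (by omega)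
      _ ∣ f ^ 2 := by rw [hfu, mul_pow, ← pow_mul, mul_comm a 2]; exact Dvd.intro _ rfl
      _ ∣ Jb f g := hdvd
  have main : ∀ W B : P2, p * W = p ^ (a + b) * B → p ^ (a + b + 1) ∣ W → p ∣ B := by
    intro W B hid hW
    have h1 : p ^ (a + b) * (p * p) ∣ p ^ (a + b) * B := by
      rw [← hid]
      calc p ^ (a + b) * (p * p) = p * p ^ (a + b + 1) := by ring
        _ ∣ p * W := mul_dvd_mul_left p hW
    have h2 : p * p ∣ B := (mul_dvd_mul_iff_left (hppow (a + b))).mp h1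
    exact dvd_trans (Dvd.intro p rfl) h2
  have hPa0 := mul_pderiv_pow p a 0
  have hPb0 := mul_pderiv_pow p b 0
  have hPa1 := mul_pderiv_pow p a 1
  have hPb1 := mul_pderiv_pow p b 1
  have hdvd0 : p ∣ pderiv 0 p * (u * v) := by
    have hid : p * (X 1 * Jb f g) =
        p ^ (a + b) * ((c : P2) * (pderiv 0 p * (u * v)) +
          p * ((m : P2) * (pderiv 0 u * v) - (d : P2) * (u * pderiv 0 v))) := by
      rw [yJ hf hg, hfu, hgv, pderiv_mul, pderiv_mul]
      linear_combination ((m : P2) * u * p ^ b * v) * hPa0 -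
        ((d : P2) * p ^ a * u * v) * hPb0 +
        (p ^ (a + b) * pderiv 0 p * u * v) * hccast
    have hB := main _ _ hid (dvd_trans hJ (Dvd.intro_left _ rfl))
    have h3 : p ∣ (c : P2) * (pderiv 0 p * (u * v)) := by
      have h4 : p ∣ p * ((m : P2) * (pderiv 0 u * v) - (d : P2) * (u * pderiv 0 v)) :=
        Dvd.intro _ rfl
      have := dvd_sub hB h4
      simpa using this
    exact hcu.dvd_mul_left.mp h3
  have hdvd1 : p ∣ pderiv 1 p * (u * v) := by
    have hid : p * (X 0 * Jb f g) =
        p ^ (a + b) * (p * ((d : P2) * (u * pderiv 1 v) - (m : P2) * (pderiv 1 u * v)) -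
          (c : P2) * (pderiv 1 p * (u * v))) := by
      rw [xJ hf hg, hfu, hgv, pderiv_mul, pderiv_mul]
      linear_combination ((d : P2) * p ^ a * u * v) * hPb1 -
        ((m : P2) * u * p ^ b * v) * hPa1 -
        (p ^ (a + b) * pderiv 1 p * u * v) * hccast
    have hB := main _ _ hid (dvd_trans hJ (Dvd.intro_left _ rfl))
    have h3 : p ∣ (c : P2) * (pderiv 1 p * (u * v)) := by
      have h4 : p ∣ p * ((d : P2) * (u * pderiv 1 v) - (m : P2) * (pderiv 1 u * v)) :=
        Dvd.intro _ rfl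
      have := dvd_sub h4 hB
      simpa using this
    exact hcu.dvd_mul_left.mp h3
  have hpp : ∀ i : Fin 2, p ∣ pderiv i p * (u * v) → p ∣ pderiv i p := by
    intro i h
    rcases hp.dvd_or_dvd h with h1 | h1
    · exact h1
    · rcases hp.dvd_or_dvd h1 with h2 | h2
      · exact absurd h2 hpu
      · exact absurd h2 hpv
  have hz0 : pderiv 0 p = 0 :=
    pderiv_eq_zero_of_self_dvd hp.not_unit hpne 0 (hpp 0 hdvd0)
  have hz1 : pderiv 1 p = 0 :=
    pderiv_eq_zero_of_self_dvd hp.not_unit hpne 1 (hpp 1 hdvd1)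
  obtain ⟨c₀, hc₀⟩ := eq_C_of_pderiv_eq_zero hz0 hz1
  have : IsUnit p := by
    rw [hc₀]
    exact isUnit_C' (fun h0 => hpne (by rw [hc₀, h0, map_zero]))
  exact hp.not_unit this

/-- The descent step: a class divisible by `f²` in `D_f` is `f` times a class in `D_f`. -/
lemma descend {f w : P2} {d : ℕ} (hd : 1 < d) (hf : f.IsHomogeneous d) (hf0 : f ≠ 0)
    (h : Dmem f (f ^ 2 * w)) : Dmem f (f * w) := by
  obtain ⟨G, hG⟩ := h
  have hG' : f ^ 2 * w = Jb f G := hG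
  have hf2 : (f ^ 2).IsHomogeneous (d + d) := by
    have := hf.mul hf
    rwa [← sq] at this
  set S := Finset.range (G.totalDegree + 1) with hS
  have hdecomp : f ^ 2 * w = ∑ n ∈ S, Jb f (homogeneousComponent n G) := by
    rw [hG', ← Jb_sum, sum_homogeneousComponent]
  have hclaim : ∀ n ∈ S, ∃ u : P2, f * Jb f u = Jb f (homogeneousComponent n G) := by
    intro n _
    by_cases hK : Jb f (homogeneousComponent n G) = 0
    · exact ⟨0, by rw [Jb_zero', mul_zero, hK]⟩
    have hn1 : 1 ≤ n := by
      rcases Nat.eq_zero_or_pos n with rfl | h1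
      · exact absurd (by rw [homogeneousComponent_zero]; exact Jb_C f _) hK
      · exact h1
    have hKhom : ∀ n' : ℕ, (Jb f (homogeneousComponent n' G)).IsHomogeneous (d - 1 + (n' - 1)) :=
      fun n' => Jb_homog hf (homogeneousComponent_isHomogeneous n' G)
    have hKc : Jb f (homogeneousComponent n G) =
        homogeneousComponent (d - 1 + (n - 1)) (f ^ 2 * w) := by
      rw [hdecomp, map_sum]
      rw [Finset.sum_eq_single n]
      · rw [homogeneousComponent_of_mem ((mem_homogeneousSubmodule _ _).mpr (hKhom n)), if_pos rfl]
      · intro n' _ hne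
        rw [homogeneousComponent_of_mem ((mem_homogeneousSubmodule _ _).mpr (hKhom n'))]
        split
        · rename_i heq
          rcases Nat.eq_zero_or_pos n' with rfl | h1
          · rw [homogeneousComponent_zero]; exact Jb_C f _
          · exact absurd (by omega : n' = n) hne
        · rfl
      · intro hnot
        rw [homogeneousComponent_of_mem ((mem_homogeneousSubmodule _ _).mpr (hKhom n)),
          if_pos rfl]
        have : homogeneousComponent n G = 0 :=
          homogeneousComponent_eq_zero _ _ (by simpa [hS] using hnot)
        rw [this, Jb_zero']
    rw [hc_homog_mul hf2 w _] at hKc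
    by_cases hle : d + d ≤ d - 1 + (n - 1)
    · rw [if_pos hle] at hKc
      have hdvd : f ^ 2 ∣ Jb f (homogeneousComponent n G) := ⟨_, hKc⟩
      have hdm : d < n := by omega
      have hG0 : homogeneousComponent n G ≠ 0 := by
        intro h0
        exact hK (by rw [h0, Jb_zero'])
      obtain ⟨u, hu⟩ := key hf (homogeneousComponent_isHomogeneous n G) hdm hf0 hG0 hdvd
      exact ⟨u, by rw [hu, Jb_mul_left]⟩
    · rw [if_neg hle] at hKc
      exact absurd hKc hK
  choose uu huu using hclaim
  refine ⟨∑ n ∈ S.attach, uu n.1 n.2, ?_⟩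
  have : f * Jb f (∑ n ∈ S.attach, uu n.1 n.2) = f * (f * w) := by
    rw [Jb_sum, Finset.mul_sum]
    calc (∑ n ∈ S.attach, f * Jb f (uu n.1 n.2))
        = ∑ n ∈ S.attach, Jb f (homogeneousComponent n.1 G) := by
          exact Finset.sum_congr rfl fun n _ => huu n.1 n.2
      _ = ∑ n ∈ S, Jb f (homogeneousComponent n G) :=
          Finset.sum_attach S (fun n => Jb f (homogeneousComponent n G))
      _ = f ^ 2 * w := hdecomp.symm
      _ = f * (f * w) := by ring
  have h2 := mul_left_cancel₀ hf0 this
  exact h2.symm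

end S9

open S9 in
/-- For `f ∈ ℂ[x,y]` primitive homogeneous of degree `d > 1` with a
non-isolated singularity at the origin, every torsion element of the Brieskorn module
`B(f) = ℂ[x,y]/D_f` has torsion order `1`, i.e. `N(f) = 1`. -/
theorem statement9 (f : MvPolynomial (Fin 2) ℂ) (d : ℕ) (hd : 1 < d)
    (hf : f.IsHomogeneous d)
    (hprim : ¬ ∃ (g : MvPolynomial (Fin 2) ℂ) (r : ℕ), 1 < r ∧ f = g ^ r)
    (hni : ∃ p : Fin 2 → ℂ, p ≠ 0 ∧ eval p (pderiv 0 f) = 0 ∧ eval p (pderiv 1 f) = 0) :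
    ∀ (g : MvPolynomial (Fin 2) ℂ) (k : ℕ), 1 ≤ k → Dmem f (f ^ k * g) → Dmem f (f * g) := by
  have hf0 : f ≠ 0 := by
    intro h0
    exact hprim ⟨0, 2, by norm_num, by rw [h0]; simp⟩
  intro g k
  induction k with
  | zero => intro hk; exact absurd hk (by norm_num)
  | succ n ih =>
    intro _ hD
    rcases Nat.eq_zero_or_pos n with rfl | h1
    · rwa [pow_one] at hD
    · apply ih h1
      obtain ⟨t, rfl⟩ : ∃ t, n = 1 + t := ⟨n - 1, by omega⟩
      have h2 : Dmem f (f ^ 2 * (f ^ t * g)) := by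
        have : f ^ 2 * (f ^ t * g) = f ^ (1 + t + 1) * g := by ring
        rwa [this]
      have h3 := descend hd hf hf0 h2
      have : f * (f ^ t * g) = f ^ (1 + t) * g := by ring
      rwa [this] at h3
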